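/- Let Z₁, Z₂ ∈ ℝ^{n×n} be symmetric positive semidefinite matrices. Then the matrices I_{rn} + BBᵀ(Z₁ ⊗ I_r) and I_{rn} + BBᵀ(Z₂ ⊗ I_r) are invertible, D(Z₁) and D(Z₂) are symmetric positive semidefinite, and if Z₁ ⪰ Z₂ then D(Z₁) ⪰ D(Z₂) (monotonicity of the Riccati operator on positive semidefinite matrices, Theorem on convergence of fixed point iteration for SDAREs, part 1). -/

import Mathlib

open Matrix
open scoped Kronecker

set_option linter.unusedSectionVars false

section Alg
variable {p q : Type*} [Fintype p] [Fintype q] [DecidableEq p] [DecidableEq q]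

lemma wood_aux (B : Matrix p q ℝ) (K : Matrix p p ℝ) (T V : Matrix q q ℝ)
    (hT : T = 1 + Bᵀ * K * B) (hVT : V * T = 1) :
    (K - K * B * (V * (Bᵀ * K))) * (1 + B * Bᵀ * K) = K := by
  have h2 : Bᵀ * (K * (B * (Bᵀ * K))) = T * (Bᵀ * K) - Bᵀ * K := by
    rw [hT]
    simp only [Matrix.add_mul, Matrix.one_mul, Matrix.mul_assoc]
    abel
  have h1 : V * (Bᵀ * (K * (B * (Bᵀ * K)))) = Bᵀ * K - V * (Bᵀ * K) := by
    rw [h2, Matrix.mul_sub, ← Matrix.mul_assoc, hVT, Matrix.one_mul]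
  simp only [Matrix.mul_add, Matrix.add_mul, Matrix.sub_mul, Matrix.mul_sub,
    Matrix.mul_one, Matrix.one_mul, Matrix.mul_assoc, h1]
  abel

lemma master_aux (B : Matrix p q ℝ) (K : Matrix p p ℝ) (L : Matrix q p ℝ) (T V : Matrix q q ℝ)
    (hKs : Kᵀ = K) (hVs : Vᵀ = V) (hT : T = 1 + Bᵀ * K * B) (hVT : V * T = 1) (hTV : T * V = 1) :
    (1 + B * L)ᵀ * K * (1 + B * L) + Lᵀ * L
      = (K - K * B * (V * (Bᵀ * K))) + (L + V * (Bᵀ * K))ᵀ * T * (L + V * (Bᵀ * K)) := by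
  have hcan1 : ∀ Y : Matrix q p ℝ, T * (V * Y) = Y := by
    intro Y; rw [← Matrix.mul_assoc, hTV, Matrix.one_mul]
  have hcan2 : ∀ Y : Matrix q p ℝ, V * (T * Y) = Y := by
    intro Y; rw [← Matrix.mul_assoc, hVT, Matrix.one_mul]
  simp only [Matrix.transpose_add, Matrix.transpose_mul, Matrix.transpose_one,
    Matrix.transpose_transpose, hKs, hVs, Matrix.mul_add, Matrix.add_mul,
    Matrix.sub_mul, Matrix.mul_sub, Matrix.one_mul, Matrix.mul_one, Matrix.mul_assoc,
    hcan1, hcan2]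
  simp only [hT, Matrix.add_mul, Matrix.mul_add, Matrix.one_mul, Matrix.mul_assoc]
  abel

lemma T_posDef (B : Matrix p q ℝ) {K : Matrix p p ℝ} (hK : K.PosSemidef) :
    (1 + Bᵀ * K * B).PosDef := by
  have h : (Bᵀ * K * B).PosSemidef := by
    have := hK.conjTranspose_mul_mul_same B
    rwa [conjTranspose_eq_transpose_of_trivial] at this
  exact Matrix.PosDef.add_posSemidef Matrix.PosDef.one h

open scoped MatrixOrder in
lemma unit_aux (B : Matrix p q ℝ) {K : Matrix p p ℝ} (hK : K.PosSemidef) :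
    IsUnit (1 + B * Bᵀ * K) := by
  set R := CFC.sqrt K with hRdef
  have hRR : R * R = K := CFC.sqrt_mul_sqrt_self K hK.nonneg
  have hRsym : Rᵀ = R := by
    have := (CFC.sqrt_nonneg K).posSemidef.isHermitian
    rwa [Matrix.IsHermitian, conjTranspose_eq_transpose_of_trivial] at this
  have hpd : (1 + R * (B * Bᵀ) * R).PosDef := by
    have h0 : (B * Bᵀ).PosSemidef := by
      have := posSemidef_self_mul_conjTranspose B
      rwa [conjTranspose_eq_transpose_of_trivial] at this
    have h := h0.conjTranspose_mul_mul_same R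
    rw [conjTranspose_eq_transpose_of_trivial, hRsym] at h
    exact Matrix.PosDef.add_posSemidef Matrix.PosDef.one h
  have hdet : (1 + B * Bᵀ * K).det = (1 + R * (B * Bᵀ) * R).det := by
    have h1 : 1 + B * Bᵀ * K = 1 + (B * Bᵀ * R) * R := by
      rw [Matrix.mul_assoc (B * Bᵀ), hRR]
    rw [h1, Matrix.det_one_add_mul_comm]
    congr 1
    rw [← Matrix.mul_assoc, ← Matrix.mul_assoc]
  rw [Matrix.isUnit_iff_isUnit_det, hdet]
  exact isUnit_iff_ne_zero.mpr (ne_of_gt hpd.det_pos)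

/-- Woodbury form of the resolvent map. -/
lemma F_eq (B : Matrix p q ℝ) {K : Matrix p p ℝ} (hK : K.PosSemidef) :
    K * (1 + B * Bᵀ * K)⁻¹
      = K - K * B * ((1 + Bᵀ * K * B)⁻¹ * (Bᵀ * K)) := by
  have hT := T_posDef B hK
  have hU := unit_aux B hK
  have hUdet : IsUnit (1 + B * Bᵀ * K).det := (Matrix.isUnit_iff_isUnit_det _).mp hU
  have hVT : (1 + Bᵀ * K * B)⁻¹ * (1 + Bᵀ * K * B) = 1 :=
    Matrix.nonsing_inv_mul _ ((Matrix.isUnit_iff_isUnit_det _).mp hT.isUnit)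
  have hw := wood_aux B K (1 + Bᵀ * K * B) (1 + Bᵀ * K * B)⁻¹ rfl hVT
  calc K * (1 + B * Bᵀ * K)⁻¹
      = (K - K * B * ((1 + Bᵀ * K * B)⁻¹ * (Bᵀ * K))) * (1 + B * Bᵀ * K) * (1 + B * Bᵀ * K)⁻¹ := by
        rw [hw]
    _ = K - K * B * ((1 + Bᵀ * K * B)⁻¹ * (Bᵀ * K)) :=
        Matrix.mul_nonsing_inv_cancel_right _ _ hUdet

/-- Completion-of-squares form of the resolvent map, for any "feedback" matrix `L`. -/
lemma F_cos (B : Matrix p q ℝ) {K : Matrix p p ℝ} (hK : K.PosSemidef) (L : Matrix q p ℝ) :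
    (1 + B * L)ᵀ * K * (1 + B * L) + Lᵀ * L
      = K * (1 + B * Bᵀ * K)⁻¹
        + (L + (1 + Bᵀ * K * B)⁻¹ * (Bᵀ * K))ᵀ * (1 + Bᵀ * K * B)
          * (L + (1 + Bᵀ * K * B)⁻¹ * (Bᵀ * K)) := by
  have hT := T_posDef B hK
  have hTdet : IsUnit (1 + Bᵀ * K * B).det := (Matrix.isUnit_iff_isUnit_det _).mp hT.isUnit
  have hVT : (1 + Bᵀ * K * B)⁻¹ * (1 + Bᵀ * K * B) = 1 := Matrix.nonsing_inv_mul _ hTdet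
  have hTV : (1 + Bᵀ * K * B) * (1 + Bᵀ * K * B)⁻¹ = 1 := Matrix.mul_nonsing_inv _ hTdet
  have hKs : Kᵀ = K := by
    have := hK.isHermitian
    rwa [Matrix.IsHermitian, conjTranspose_eq_transpose_of_trivial] at this
  have hTs : (1 + Bᵀ * K * B)ᵀ = 1 + Bᵀ * K * B := by
    have := hT.isHermitian
    rwa [Matrix.IsHermitian, conjTranspose_eq_transpose_of_trivial] at this
  have hVs : ((1 + Bᵀ * K * B)⁻¹)ᵀ = (1 + Bᵀ * K * B)⁻¹ := by
    rw [Matrix.transpose_nonsing_inv, hTs]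
  rw [F_eq B hK]
  exact master_aux B K L (1 + Bᵀ * K * B) (1 + Bᵀ * K * B)⁻¹ hKs hVs rfl hVT hTV

lemma transpose_psd {K : Matrix p p ℝ} (hK : K.PosSemidef) (M : Matrix p q ℝ) :
    (Mᵀ * K * M).PosSemidef := by
  have := hK.conjTranspose_mul_mul_same M
  rwa [conjTranspose_eq_transpose_of_trivial] at this

/-- Monotonicity of `K ↦ K (1 + B Bᵀ K)⁻¹` on positive semidefinite matrices. -/
lemma F_mono (B : Matrix p q ℝ) {K₁ K₂ : Matrix p p ℝ}
    (h₁ : K₁.PosSemidef) (h₂ : K₂.PosSemidef) (hd : (K₁ - K₂).PosSemidef) :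
    (K₁ * (1 + B * Bᵀ * K₁)⁻¹ - K₂ * (1 + B * Bᵀ * K₂)⁻¹).PosSemidef := by
  set L : Matrix q p ℝ := -((1 + Bᵀ * K₁ * B)⁻¹ * (Bᵀ * K₁)) with hL
  have hc1 := F_cos B h₁ L
  have hc2 := F_cos B h₂ L
  have hzero : L + (1 + Bᵀ * K₁ * B)⁻¹ * (Bᵀ * K₁) = 0 := by
    rw [hL, neg_add_cancel]
  rw [hzero, Matrix.transpose_zero, Matrix.zero_mul, Matrix.zero_mul, add_zero] at hc1
  set E := (L + (1 + Bᵀ * K₂ * B)⁻¹ * (Bᵀ * K₂))ᵀ * (1 + Bᵀ * K₂ * B)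
      * (L + (1 + Bᵀ * K₂ * B)⁻¹ * (Bᵀ * K₂)) with hE
  have hdiff : K₁ * (1 + B * Bᵀ * K₁)⁻¹ - K₂ * (1 + B * Bᵀ * K₂)⁻¹
      = (1 + B * L)ᵀ * (K₁ - K₂) * (1 + B * L) + E := by
    have e1 : K₁ * (1 + B * Bᵀ * K₁)⁻¹ = (1 + B * L)ᵀ * K₁ * (1 + B * L) + Lᵀ * L := hc1.symm
    have e2 : K₂ * (1 + B * Bᵀ * K₂)⁻¹
        = (1 + B * L)ᵀ * K₂ * (1 + B * L) + Lᵀ * L - E := by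
      rw [hc2]; abel
    rw [e1, e2]
    simp only [Matrix.mul_sub, Matrix.sub_mul]
    abel
  rw [hdiff]
  exact (transpose_psd hd _).add (transpose_psd (T_posDef B h₂).posSemidef _)

lemma F_psd (B : Matrix p q ℝ) {K : Matrix p p ℝ} (hK : K.PosSemidef) :
    (K * (1 + B * Bᵀ * K)⁻¹).PosSemidef := by
  have h0 : (0 : Matrix p p ℝ).PosSemidef := Matrix.PosSemidef.zero
  have := F_mono B hK h0 (by simpa using hK)
  simpa using this

end Alg

open scoped MatrixOrder in
lemma kron_one_posSemidef {n r : ℕ} {Z : Matrix (Fin n) (Fin n) ℝ} (hZ : Z.PosSemidef) :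
    (Z ⊗ₖ (1 : Matrix (Fin r) (Fin r) ℝ)).PosSemidef := by
  set R := CFC.sqrt Z with hRdef
  have hRR : R * R = Z := CFC.sqrt_mul_sqrt_self Z hZ.nonneg
  have hRsym : Rᵀ = R := by
    have := (CFC.sqrt_nonneg Z).posSemidef.isHermitian
    rwa [Matrix.IsHermitian, conjTranspose_eq_transpose_of_trivial] at this
  have key : Z ⊗ₖ (1 : Matrix (Fin r) (Fin r) ℝ)
      = (R ⊗ₖ (1 : Matrix (Fin r) (Fin r) ℝ))ᴴ * (R ⊗ₖ (1 : Matrix (Fin r) (Fin r) ℝ)) := by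
    rw [conjTranspose_eq_transpose_of_trivial, ← Matrix.kroneckerMap_transpose, hRsym,
      Matrix.transpose_one, ← Matrix.mul_kronecker_mul, hRR, Matrix.one_mul]
  rw [key]
  exact Matrix.posSemidef_conjTranspose_mul_self _

lemma kron_one_sub {n r : ℕ} (Z₁ Z₂ : Matrix (Fin n) (Fin n) ℝ) :
    (Z₁ - Z₂) ⊗ₖ (1 : Matrix (Fin r) (Fin r) ℝ)
      = Z₁ ⊗ₖ (1 : Matrix (Fin r) (Fin r) ℝ) - Z₂ ⊗ₖ (1 : Matrix (Fin r) (Fin r) ℝ) := by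
  ext i j
  simp [Matrix.sub_apply, sub_mul]

/-- The SDARE Riccati operator `D(X) = Aᵀ (X ⊗ I_r) (I + B Bᵀ (X ⊗ I_r))⁻¹ A + Cᵀ C`,
with `rn` realized as the index type `Fin n × Fin r`. -/
noncomputable def Dop {n m l r : ℕ}
    (A : Matrix (Fin n × Fin r) (Fin n) ℝ)
    (B : Matrix (Fin n × Fin r) (Fin m) ℝ)
    (C : Matrix (Fin l) (Fin n) ℝ)
    (X : Matrix (Fin n) (Fin n) ℝ) : Matrix (Fin n) (Fin n) ℝ :=
  Aᵀ * (X ⊗ₖ (1 : Matrix (Fin r) (Fin r) ℝ)) *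
      (1 + B * Bᵀ * (X ⊗ₖ (1 : Matrix (Fin r) (Fin r) ℝ)))⁻¹ * A + Cᵀ * C

theorem stmt0 {n m l r : ℕ} (hn : 0 < n) (hm : 0 < m) (hl : 0 < l) (hr : 0 < r)
    (A : Matrix (Fin n × Fin r) (Fin n) ℝ)
    (B : Matrix (Fin n × Fin r) (Fin m) ℝ)
    (C : Matrix (Fin l) (Fin n) ℝ)
    (Z₁ Z₂ : Matrix (Fin n) (Fin n) ℝ)
    (hZ₁ : Z₁.PosSemidef) (hZ₂ : Z₂.PosSemidef) :
    IsUnit (1 + B * Bᵀ * (Z₁ ⊗ₖ (1 : Matrix (Fin r) (Fin r) ℝ))) ∧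
    IsUnit (1 + B * Bᵀ * (Z₂ ⊗ₖ (1 : Matrix (Fin r) (Fin r) ℝ))) ∧
    (Dop A B C Z₁).PosSemidef ∧ (Dop A B C Z₂).PosSemidef ∧
    ((Z₁ - Z₂).PosSemidef → (Dop A B C Z₁ - Dop A B C Z₂).PosSemidef) := by
  have hK₁ := kron_one_posSemidef (r := r) hZ₁
  have hK₂ := kron_one_posSemidef (r := r) hZ₂
  set K₁ := Z₁ ⊗ₖ (1 : Matrix (Fin r) (Fin r) ℝ)
  set K₂ := Z₂ ⊗ₖ (1 : Matrix (Fin r) (Fin r) ℝ)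
  have hCC : (Cᵀ * C).PosSemidef := by
    have := Matrix.posSemidef_conjTranspose_mul_self C
    rwa [conjTranspose_eq_transpose_of_trivial] at this
  have hDop : ∀ (Z : Matrix (Fin n) (Fin n) ℝ),
      Dop A B C Z = Aᵀ * ((Z ⊗ₖ (1 : Matrix (Fin r) (Fin r) ℝ)) *
        (1 + B * Bᵀ * (Z ⊗ₖ (1 : Matrix (Fin r) (Fin r) ℝ)))⁻¹) * A + Cᵀ * C := by
    intro Z
    rw [Dop, Matrix.mul_assoc Aᵀ]
  refine ⟨unit_aux B hK₁, unit_aux B hK₂, ?_, ?_, ?_⟩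
  · rw [hDop]
    exact (transpose_psd (F_psd B hK₁) A).add hCC
  · rw [hDop]
    exact (transpose_psd (F_psd B hK₂) A).add hCC
  · intro hsub
    have hd : (K₁ - K₂).PosSemidef := by
      have := kron_one_posSemidef (r := r) hsub
      rwa [kron_one_sub] at this
    have hmono := F_mono B hK₁ hK₂ hd
    have hdiff : Dop A B C Z₁ - Dop A B C Z₂
        = Aᵀ * (K₁ * (1 + B * Bᵀ * K₁)⁻¹ - K₂ * (1 + B * Bᵀ * K₂)⁻¹) * A := by
      rw [hDop, hDop]
      simp only [Matrix.mul_sub, Matrix.sub_mul]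
      abel
    rw [hdiff]
    exact transpose_psd hmono A
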